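/- Let ε ∈ (0,1), N ≥ 1, and let t ≥ 1 and K be integers with 1 ≤ K and K+1 ≤ t. If R_t(K) > R_t(K+1), then for every j ∈ {1, …, t} one has K*_j ≤ K̂_j ≤ K. -/
import Mathlib


/-- Single-receiver decoding probability: probability that one receiver obtains
`K` successful receptions within `T` slots over a binary erasure channel with
erasure probability `ε`.  (The sum over `Finset.Icc K T` is empty, i.e. `0`,
when `T < K`.) -/
noncomputable def Phat (ε : ℝ) (K T : ℕ) : ℝ :=
  ∑ τ ∈ Finset.Icc K T, ((τ - 1).choose (K - 1) : ℝ) * ε ^ (τ - K) * (1 - ε) ^ K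

/-- Probability that all `N` receivers (over i.i.d. erasure channels) decode a
network-coded block of `K` packets within `T` slots. -/
noncomputable def Pall (ε : ℝ) (N K T : ℕ) : ℝ := (Phat ε K T) ^ N

/-- Expected immediate reward: expected number of packets decoded by all `N`
receivers when a block of size `K` is transmitted with `T` slots remaining. -/
noncomputable def Rew (ε : ℝ) (N T K : ℕ) : ℝ := (K : ℝ) * Pall ε N K T

/-- `Kh` is the greedy block size for horizon `T`: the least maximizer of the
expected immediate reward `K ↦ R_T(K)` over `K ∈ {1,…,T}`. -/
def IsGreedy (ε : ℝ) (N T Kh : ℕ) : Prop :=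
  Kh ∈ Finset.Icc 1 T ∧ (∀ K ∈ Finset.Icc 1 T, Rew ε N T K ≤ Rew ε N T Kh) ∧
  (∀ K ∈ Finset.Icc 1 T, (∀ K' ∈ Finset.Icc 1 T, Rew ε N T K' ≤ Rew ε N T K) → Kh ≤ K)

/-- Right-hand side of the Bellman recursion for the block-size-adaptation MDP:
`R_t(K) + ∑_{j=0}^{t-K} (P(K, t-j) - P(K, t-j-1)) · V(j)`. -/
noncomputable def bellmanRHS (ε : ℝ) (N : ℕ) (V : ℕ → ℝ) (t K : ℕ) : ℝ :=
  Rew ε N t K +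
    ∑ j ∈ Finset.range (t - K + 1), (Pall ε N K (t - j) - Pall ε N K (t - j - 1)) * V j

/-- `V` is the optimal value function of the finite-horizon MDP (Bellman recursion with
`V 0 = 0`, and `V t` the maximum of `bellmanRHS` over `K ∈ {1,…,t}`), and `Ks t` is the
least block size in `{1,…,t}` attaining that maximum. -/
def BellmanSystem (ε : ℝ) (N : ℕ) (V : ℕ → ℝ) (Ks : ℕ → ℕ) : Prop :=
  V 0 = 0 ∧
  (∀ t, 1 ≤ t → ∀ K ∈ Finset.Icc 1 t, bellmanRHS ε N V t K ≤ V t) ∧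
  (∀ t, 1 ≤ t → Ks t ∈ Finset.Icc 1 t ∧ V t = bellmanRHS ε N V t (Ks t) ∧
    ∀ K ∈ Finset.Icc 1 t, V t = bellmanRHS ε N V t K → Ks t ≤ K)


variable {ε : ℝ} {K T : ℕ}

lemma sum_Icc_range (f : ℕ → ℝ) (a b : ℕ) :
    ∑ i ∈ Finset.Icc a b, f i = ∑ d ∈ Finset.range (b + 1 - a), f (a + d) := by
  rw [← Finset.Ico_add_one_right_eq_Icc, Finset.sum_Ico_eq_sum_range]

lemma phat_succ_T (hK : K ≤ T + 1) :
    Phat ε K (T + 1) = Phat ε K T + (T.choose (K - 1) : ℝ) * ε ^ (T + 1 - K) * (1 - ε) ^ K := by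
  unfold Phat
  rw [Finset.sum_Icc_succ_top hK]
  simp

lemma phat_empty (hT : T < K) : Phat ε K T = 0 := by
  unfold Phat
  rw [Finset.Icc_eq_empty (by omega)]
  simp

/-- Binomial tail. -/
noncomputable def Btail (ε : ℝ) (K T : ℕ) : ℝ :=
  ∑ i ∈ Finset.Icc K T, (T.choose i : ℝ) * (1 - ε) ^ i * ε ^ (T - i)

lemma btail_empty (hT : T < K) : Btail ε K T = 0 := by
  unfold Btail
  rw [Finset.Icc_eq_empty (by omega)]
  simp

lemma phat_eq_btail (hK1 : 1 ≤ K) : Phat ε K T = Btail ε K T := by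
  induction T with
  | zero => rw [phat_empty hK1, btail_empty hK1]
  | succ T ih =>
    by_cases hK : K ≤ T + 1
    · rw [phat_succ_T hK, ih]
      unfold Btail
      have pascal : ∀ i ∈ Finset.Icc K (T+1), ((T+1).choose i : ℝ) * (1 - ε) ^ i * ε ^ (T + 1 - i)
          = (T.choose i : ℝ) * (1 - ε) ^ i * ε ^ (T + 1 - i)
            + (T.choose (i-1) : ℝ) * (1 - ε) ^ i * ε ^ (T + 1 - i) := by
        intro i hi
        have hi1 : 1 ≤ i := le_trans hK1 (Finset.mem_Icc.mp hi).1
        have : (T+1).choose i = T.choose (i-1) + T.choose i := by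
          rcases Nat.exists_eq_add_of_le hi1 with ⟨m, rfl⟩
          simp [Nat.choose_succ_succ, Nat.add_comm]
        rw [this]
        push_cast
        ring
      rw [Finset.sum_congr rfl pascal, Finset.sum_add_distrib]
      have h1 : ∑ i ∈ Finset.Icc K (T+1), (T.choose i : ℝ) * (1 - ε) ^ i * ε ^ (T + 1 - i)
          = ε * ∑ i ∈ Finset.Icc K T, (T.choose i : ℝ) * (1 - ε) ^ i * ε ^ (T - i) := by
        rw [Finset.sum_Icc_succ_top (by omega), Finset.mul_sum]
        have hz : (T.choose (T+1) : ℝ) = 0 := by simp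
        rw [hz, zero_mul, zero_mul, add_zero]
        apply Finset.sum_congr rfl
        intro i hi
        have hiT : i ≤ T := (Finset.mem_Icc.mp hi).2
        have he : T + 1 - i = (T - i) + 1 := by omega
        rw [he]
        ring
      have h2 : ∑ i ∈ Finset.Icc K (T+1), (T.choose (i-1) : ℝ) * (1 - ε) ^ i * ε ^ (T + 1 - i)
          = (1 - ε) * (∑ i ∈ Finset.Icc K T, (T.choose i : ℝ) * (1 - ε) ^ i * ε ^ (T - i))
            + (T.choose (K-1) : ℝ) * ε ^ (T + 1 - K) * (1 - ε) ^ K := by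
        have key : ∑ i ∈ Finset.Icc K (T+1), (T.choose (i-1) : ℝ) * (1 - ε) ^ i * ε ^ (T + 1 - i)
            = ∑ i ∈ Finset.Icc (K-1) T, (T.choose i : ℝ) * (1 - ε) ^ (i+1) * ε ^ (T - i) := by
          rw [sum_Icc_range, sum_Icc_range]
          have hr : T + 1 + 1 - K = T + 1 - (K - 1) := by omega
          rw [hr]
          apply Finset.sum_congr rfl
          intro d hd
          have e1 : K + d - 1 = K - 1 + d := by omega
          have e2 : T + 1 - (K + d) = T - (K - 1 + d) := by omega
          have e3 : K + d = (K - 1 + d) + 1 := by omega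
          rw [e1, e2, e3]
        rw [key]
        have hsplit : Finset.Icc (K-1) T = Finset.cons (K-1) (Finset.Icc K T)
            (by simp [Finset.mem_Icc]; omega) := by
          rw [Finset.Icc_eq_cons_Ioc (by omega)]
          congr 1
          rw [← Finset.Icc_add_one_left_eq_Ioc]
          congr 1
          omega
        rw [hsplit, Finset.sum_cons]
        have e4 : K - 1 + 1 = K := by omega
        have e5 : T - (K - 1) = T + 1 - K := by omega
        rw [e4, e5]
        have hs : ∑ i ∈ Finset.Icc K T, (T.choose i : ℝ) * (1 - ε) ^ (i+1) * ε ^ (T - i)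
            = (1 - ε) * ∑ i ∈ Finset.Icc K T, (T.choose i : ℝ) * (1 - ε) ^ i * ε ^ (T - i) := by
          rw [Finset.mul_sum]
          exact Finset.sum_congr rfl fun i _ => by ring
        rw [hs]
        ring
      rw [h1, h2]
      ring
    · rw [phat_empty (by omega), btail_empty (by omega)]

lemma phat_nonneg (hε0 : 0 < ε) (hε1 : ε < 1) (K T : ℕ) : 0 ≤ Phat ε K T := by
  apply Finset.sum_nonneg
  intro τ _
  have h1 : (0:ℝ) ≤ 1 - ε := by linarith
  positivity

lemma phat_mono_T (hε0 : 0 < ε) (hε1 : ε < 1) (K : ℕ) {T T' : ℕ} (h : T ≤ T') :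
    Phat ε K T ≤ Phat ε K T' := by
  apply Finset.sum_le_sum_of_subset_of_nonneg (Finset.Icc_subset_Icc_right h)
  intro τ _ _
  have h1 : (0:ℝ) ≤ 1 - ε := by linarith
  positivity

lemma phat_pos (hε0 : 0 < ε) (hε1 : ε < 1) {K T : ℕ} (hK : 1 ≤ K) (hKT : K ≤ T) :
    0 < Phat ε K T := by
  have h1 : (0:ℝ) < 1 - ε := by linarith
  have hterm : (0:ℝ) < ((K - 1).choose (K - 1) : ℝ) * ε ^ (K - K) * (1 - ε) ^ K := by
    simp [Nat.choose_self]
    positivity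
  calc (0:ℝ) < ((K - 1).choose (K - 1) : ℝ) * ε ^ (K - K) * (1 - ε) ^ K := hterm
    _ ≤ Phat ε K T := by
        apply Finset.single_le_sum (f := fun τ =>
          ((τ - 1).choose (K - 1) : ℝ) * ε ^ (τ - K) * (1 - ε) ^ K)
        · intro τ _
          positivity
        · exact Finset.mem_Icc.mpr ⟨le_refl K, hKT⟩

lemma phat_anti_K (hε0 : 0 < ε) (hε1 : ε < 1) {K K' : ℕ} (hK : 1 ≤ K) (hKK : K ≤ K') (T : ℕ) :
    Phat ε K' T ≤ Phat ε K T := by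
  rw [phat_eq_btail hK, phat_eq_btail (le_trans hK hKK)]
  apply Finset.sum_le_sum_of_subset_of_nonneg (Finset.Icc_subset_Icc_left hKK)
  intro τ _ _
  have h1 : (0:ℝ) ≤ 1 - ε := by linarith
  positivity

-- nat inequality for ratio_T
lemma choose_ineq1 {τ : ℕ} (hK : 1 ≤ K) (hτ : K + 1 ≤ τ) (hτT : τ ≤ T) :
    (τ-1).choose K * T.choose (K-1) ≤ T.choose K * (τ-1).choose (K-1) := by
  obtain ⟨k, rfl⟩ : ∃ k, K = k + 1 := ⟨K-1, by omega⟩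
  have h1 : (τ-1).choose (k+1) * (k+1) = (τ-1).choose ((k+1)-1) * (τ - (k+1)) := by
    rw [Nat.choose_succ_right_eq]
    simp only [Nat.add_sub_cancel]
    congr 1
    omega
  have h2 : T.choose (k+1) * (k+1) = T.choose ((k+1)-1) * (T - (k+1) + 1) := by
    rw [Nat.choose_succ_right_eq]
    simp only [Nat.add_sub_cancel]
    congr 1
    omega
  set K := k + 1 with hKdef
  have key : (τ-1).choose K * T.choose (K-1) * K ≤ T.choose K * (τ-1).choose (K-1) * K := by
    calc (τ-1).choose K * T.choose (K-1) * K = ((τ-1).choose K * K) * T.choose (K-1) := by ring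
      _ = (τ-1).choose (K-1) * (τ - K) * T.choose (K-1) := by rw [h1]
      _ ≤ (τ-1).choose (K-1) * (T - K + 1) * T.choose (K-1) := by
          apply Nat.mul_le_mul_right
          apply Nat.mul_le_mul_left
          omega
      _ = (T.choose (K-1) * (T - K + 1)) * (τ-1).choose (K-1) := by ring
      _ = T.choose K * (τ-1).choose (K-1) * K := by rw [← h2]; ring
  exact Nat.le_of_mul_le_mul_right key (by omega)

-- ratio of Phat (K+1)/K is monotone in T
lemma ratio_T (hε0 : 0 < ε) (hε1 : ε < 1) (hK : 1 ≤ K) (hKT : K ≤ T) :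
    Phat ε (K+1) T * Phat ε K (T+1) ≤ Phat ε (K+1) (T+1) * Phat ε K T := by
  have hp : (0:ℝ) < 1 - ε := by linarith
  rw [phat_succ_T (by omega), phat_succ_T (K := K+1) (by omega)]
  have key : Phat ε (K+1) T * ((T.choose (K - 1) : ℝ) * ε ^ (T + 1 - K) * (1 - ε) ^ K)
      ≤ ((T.choose (K+1-1) : ℝ) * ε ^ (T + 1 - (K+1)) * (1 - ε) ^ (K+1)) * Phat ε K T := by
    unfold Phat
    rw [Finset.sum_mul, Finset.mul_sum]
    have termwise : ∀ τ ∈ Finset.Icc (K+1) T,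
        ((τ - 1).choose (K + 1 - 1) : ℝ) * ε ^ (τ - (K + 1)) * (1 - ε) ^ (K + 1) *
            ((T.choose (K - 1) : ℝ) * ε ^ (T + 1 - K) * (1 - ε) ^ K)
        ≤ (T.choose (K + 1 - 1) : ℝ) * ε ^ (T + 1 - (K + 1)) * (1 - ε) ^ (K + 1) *
            (((τ - 1).choose (K - 1) : ℝ) * ε ^ (τ - K) * (1 - ε) ^ K) := by
      intro τ hτ
      simp only [Finset.mem_Icc] at hτ
      obtain ⟨hτ1, hτ2⟩ := hτ
      have e1 : (τ - (K+1)) + (T + 1 - K) = (T + 1 - (K+1)) + (τ - K) := by omega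
      have hchoose := choose_ineq1 (T := T) hK hτ1 hτ2
      have hc : ((τ-1).choose ((K+1)-1) * T.choose (K-1) : ℝ)
          ≤ (T.choose ((K+1)-1) * (τ-1).choose (K-1) : ℝ) := by
        have : (K+1)-1 = K := by omega
        rw [this]
        exact_mod_cast hchoose
      calc ((τ - 1).choose (K + 1 - 1) : ℝ) * ε ^ (τ - (K + 1)) * (1 - ε) ^ (K + 1) *
            ((T.choose (K - 1) : ℝ) * ε ^ (T + 1 - K) * (1 - ε) ^ K)
          = ((τ-1).choose ((K+1)-1) * T.choose (K-1) : ℝ) *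
            (ε ^ ((τ - (K+1)) + (T + 1 - K)) * (1 - ε) ^ (K + 1 + K)) := by
            push_cast
            rw [pow_add, pow_add]
            ring
        _ ≤ (T.choose ((K+1)-1) * (τ-1).choose (K-1) : ℝ) *
            (ε ^ ((τ - (K+1)) + (T + 1 - K)) * (1 - ε) ^ (K + 1 + K)) := by
            apply mul_le_mul_of_nonneg_right hc
            positivity
        _ = (T.choose (K + 1 - 1) : ℝ) * ε ^ (T + 1 - (K + 1)) * (1 - ε) ^ (K + 1) *
            (((τ - 1).choose (K - 1) : ℝ) * ε ^ (τ - K) * (1 - ε) ^ K) := by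
            rw [e1]
            push_cast
            rw [pow_add, pow_add]
            ring
    calc ∑ τ ∈ Finset.Icc (K+1) T, ((τ - 1).choose (K + 1 - 1) : ℝ) * ε ^ (τ - (K + 1)) * (1 - ε) ^ (K + 1) *
            ((T.choose (K - 1) : ℝ) * ε ^ (T + 1 - K) * (1 - ε) ^ K)
        ≤ ∑ τ ∈ Finset.Icc (K+1) T, (T.choose (K + 1 - 1) : ℝ) * ε ^ (T + 1 - (K + 1)) * (1 - ε) ^ (K + 1) *
            (((τ - 1).choose (K - 1) : ℝ) * ε ^ (τ - K) * (1 - ε) ^ K) := Finset.sum_le_sum termwise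
      _ ≤ ∑ τ ∈ Finset.Icc K T, (T.choose (K + 1 - 1) : ℝ) * ε ^ (T + 1 - (K + 1)) * (1 - ε) ^ (K + 1) *
            (((τ - 1).choose (K - 1) : ℝ) * ε ^ (τ - K) * (1 - ε) ^ K) := by
          apply Finset.sum_le_sum_of_subset_of_nonneg (Finset.Icc_subset_Icc_left (by omega))
          intro τ _ _
          positivity
  nlinarith [phat_nonneg hε0 hε1 (K+1) T, phat_nonneg hε0 hε1 K T]

lemma choose_ineq2 {i : ℕ} (hKi : K ≤ i) (hiT : i + 1 ≤ T) :
    T.choose K * T.choose (i+1) ≤ T.choose (K+1) * T.choose i := by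
  have h1 : T.choose (i+1) * (i+1) = T.choose i * (T - i) := Nat.choose_succ_right_eq T i
  have h2 : T.choose (K+1) * (K+1) = T.choose K * (T - K) := Nat.choose_succ_right_eq T K
  have key : T.choose K * T.choose (i+1) * ((i+1) * (K+1))
      ≤ T.choose (K+1) * T.choose i * ((i+1) * (K+1)) := by
    calc T.choose K * T.choose (i+1) * ((i+1) * (K+1))
        = (T.choose (i+1) * (i+1)) * (T.choose K * (K+1)) := by ring
      _ = (T.choose i * (T - i)) * (T.choose K * (K+1)) := by rw [h1]
      _ = (T.choose K * T.choose i) * ((T - i) * (K+1)) := by ring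
      _ ≤ (T.choose K * T.choose i) * ((T - K) * (i+1)) := by
          apply Nat.mul_le_mul_left
          apply Nat.mul_le_mul <;> omega
      _ = (T.choose K * (T - K)) * (T.choose i * (i+1)) := by ring
      _ = (T.choose (K+1) * (K+1)) * (T.choose i * (i+1)) := by rw [h2]
      _ = T.choose (K+1) * T.choose i * ((i+1) * (K+1)) := by ring
  exact Nat.le_of_mul_le_mul_right key (by positivity)

lemma btail_term_nonneg (hε0 : 0 < ε) (hε1 : ε < 1) (i : ℕ) :
    (0:ℝ) ≤ (T.choose i : ℝ) * (1 - ε) ^ i * ε ^ (T - i) := by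
  have h1 : (0:ℝ) ≤ 1 - ε := by linarith
  positivity

lemma btail_cons (hKT : K ≤ T) :
    Btail ε K T = (T.choose K : ℝ) * (1 - ε) ^ K * ε ^ (T - K) + Btail ε (K+1) T := by
  unfold Btail
  rw [Finset.Icc_eq_cons_Ioc hKT, Finset.sum_cons, ← Finset.Icc_add_one_left_eq_Ioc]

lemma btail_key (hε0 : 0 < ε) (hε1 : ε < 1) (hKT : K + 2 ≤ T) :
    ((T.choose K : ℝ) * (1 - ε) ^ K * ε ^ (T - K)) * Btail ε (K+2) T
    ≤ ((T.choose (K+1) : ℝ) * (1 - ε) ^ (K+1) * ε ^ (T - (K+1))) * Btail ε (K+1) T := by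
  have h1 : (0:ℝ) < 1 - ε := by linarith
  unfold Btail
  rw [Finset.mul_sum, Finset.mul_sum, sum_Icc_range, sum_Icc_range]
  have hr : T + 1 - (K + 2) + 1 ≤ T + 1 - (K + 1) := by omega
  calc ∑ d ∈ Finset.range (T + 1 - (K + 2)),
        (T.choose K : ℝ) * (1 - ε) ^ K * ε ^ (T - K) *
          ((T.choose (K + 2 + d) : ℝ) * (1 - ε) ^ (K + 2 + d) * ε ^ (T - (K + 2 + d)))
      ≤ ∑ d ∈ Finset.range (T + 1 - (K + 2)),
        (T.choose (K + 1) : ℝ) * (1 - ε) ^ (K + 1) * ε ^ (T - (K + 1)) *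
          ((T.choose (K + 1 + d) : ℝ) * (1 - ε) ^ (K + 1 + d) * ε ^ (T - (K + 1 + d))) := ?_
    _ ≤ ∑ d ∈ Finset.range (T + 1 - (K + 1)),
        (T.choose (K + 1) : ℝ) * (1 - ε) ^ (K + 1) * ε ^ (T - (K + 1)) *
          ((T.choose (K + 1 + d) : ℝ) * (1 - ε) ^ (K + 1 + d) * ε ^ (T - (K + 1 + d))) := by
        apply Finset.sum_le_sum_of_subset_of_nonneg
          (Finset.range_subset_range.mpr (by omega : T + 1 - (K+2) ≤ T + 1 - (K+1)))
        intro d _ _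
        positivity
  · apply Finset.sum_le_sum
    intro d hd
    simp only [Finset.mem_range] at hd
    -- i := K + 1 + d ; term indices: K+2+d = i+1
    have hiT : K + 2 + d ≤ T := by omega
    have hch := choose_ineq2 (K := K) (T := T) (i := K + 1 + d) (by omega) (by omega)
    have e0 : K + 2 + d = (K + 1 + d) + 1 := by omega
    have ep : K + (K + 2 + d) = (K + 1) + (K + 1 + d) := by omega
    have ee : (T - K) + (T - (K + 2 + d)) = (T - (K+1)) + (T - (K + 1 + d)) := by omega
    calc (T.choose K : ℝ) * (1 - ε) ^ K * ε ^ (T - K) *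
          ((T.choose (K + 2 + d) : ℝ) * (1 - ε) ^ (K + 2 + d) * ε ^ (T - (K + 2 + d)))
        = ((T.choose K * T.choose ((K + 1 + d) + 1) : ℕ) : ℝ) *
          ((1 - ε) ^ (K + (K + 2 + d)) * ε ^ ((T - K) + (T - (K + 2 + d)))) := by
          rw [← e0]
          push_cast
          rw [pow_add, pow_add]
          ring
      _ ≤ ((T.choose (K+1) * T.choose (K + 1 + d) : ℕ) : ℝ) *
          ((1 - ε) ^ (K + (K + 2 + d)) * ε ^ ((T - K) + (T - (K + 2 + d)))) := by
          apply mul_le_mul_of_nonneg_right (by exact_mod_cast hch)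
          positivity
      _ = (T.choose (K+1) : ℝ) * (1 - ε) ^ (K+1) * ε ^ (T - (K+1)) *
          ((T.choose (K + 1 + d) : ℝ) * (1 - ε) ^ (K + 1 + d) * ε ^ (T - (K + 1 + d))) := by
          rw [ep, ee]
          push_cast
          rw [pow_add, pow_add]
          ring

lemma phat_logconcave (hε0 : 0 < ε) (hε1 : ε < 1) (hK : 1 ≤ K) (T : ℕ) :
    Phat ε K T * Phat ε (K+2) T ≤ Phat ε (K+1) T * Phat ε (K+1) T := by
  by_cases hKT : K + 2 ≤ T
  · rw [phat_eq_btail hK, phat_eq_btail (by omega), phat_eq_btail (by omega)]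
    have hsplit1 := btail_cons (ε := ε) (K := K) (T := T) (by omega)
    have hsplit2 := btail_cons (ε := ε) (K := K+1) (T := T) (by omega)
    have hkey := btail_key hε0 hε1 hKT
    have hnn1 : (0:ℝ) ≤ Btail ε (K+1) T := by
      rw [← phat_eq_btail (by omega)]; exact phat_nonneg hε0 hε1 _ _
    have hnn2 : (0:ℝ) ≤ Btail ε (K+2) T := by
      rw [← phat_eq_btail (by omega)]; exact phat_nonneg hε0 hε1 _ _
    nlinarith
  · rw [phat_empty (by omega : T < K + 2)]
    have := phat_nonneg hε0 hε1 K T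
    have := phat_nonneg hε0 hε1 (K+1) T
    nlinarith

section PallRew
variable (hε0 : 0 < ε) (hε1 : ε < 1) {N : ℕ}
include hε0 hε1

lemma pall_nonneg (N K T : ℕ) : 0 ≤ Pall ε N K T :=
  pow_nonneg (phat_nonneg hε0 hε1 K T) N

lemma pall_mono_T (N K : ℕ) {T T' : ℕ} (h : T ≤ T') : Pall ε N K T ≤ Pall ε N K T' :=
  pow_le_pow_left₀ (phat_nonneg hε0 hε1 K T) (phat_mono_T hε0 hε1 K h) N

lemma pall_anti_K {K K' : ℕ} (hK : 1 ≤ K) (hKK : K ≤ K') (N T : ℕ) :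
    Pall ε N K' T ≤ Pall ε N K T :=
  pow_le_pow_left₀ (phat_nonneg hε0 hε1 K' T) (phat_anti_K hε0 hε1 hK hKK T) N

omit hε0 hε1 in
lemma pall_zero (hN : 1 ≤ N) (hK : 1 ≤ K) : Pall ε N K (K - 1) = 0 := by
  unfold Pall
  rw [phat_empty (by omega)]
  exact zero_pow (by omega)

lemma rew_nonneg (N T K : ℕ) : 0 ≤ Rew ε N T K :=
  mul_nonneg (by positivity) (pall_nonneg hε0 hε1 N K T)

lemma rew_mono_T (N K : ℕ) {T T' : ℕ} (h : T ≤ T') : Rew ε N T K ≤ Rew ε N T' K :=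
  mul_le_mul_of_nonneg_left (pall_mono_T hε0 hε1 N K h) (by positivity)

end PallRew

lemma abel_aux (b W : ℕ → ℝ) (M : ℕ) :
    ∑ i ∈ Finset.range (M+1), (b i - b (i+1)) * W i
      = (∑ i ∈ Finset.range M, b (i+1) * (W (i+1) - W i)) + b 0 * W 0 - b (M+1) * W M := by
  induction M with
  | zero => simp; ring
  | succ M ih =>
    rw [Finset.sum_range_succ, ih, Finset.sum_range_succ]
    ring

lemma bellman_abel (hε0 : 0 < ε) (hε1 : ε < 1) {N : ℕ} (hN : 1 ≤ N) (V : ℕ → ℝ) (hV0 : V 0 = 0)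
    {t K : ℕ} (hK : 1 ≤ K) (hKt : K ≤ t) :
    bellmanRHS ε N V t K
      = Rew ε N t K + ∑ i ∈ Finset.range (t - K), Pall ε N K (t - i - 1) * (V (i+1) - V i) := by
  unfold bellmanRHS
  congr 1
  have := abel_aux (fun i => Pall ε N K (t - i)) V (t - K)
  simp only [← Nat.sub_sub] at this ⊢
  rw [this, hV0]
  have hz : Pall ε N K (t - (t - K) - 1) = 0 := by
    have e : t - (t - K) - 1 = K - 1 := by omega
    rw [e]
    exact pall_zero hN hK
  rw [hz]
  simp

section Vprops
variable (hε0 : 0 < ε) (hε1 : ε < 1) {N : ℕ} (hN : 1 ≤ N)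
  {V : ℕ → ℝ} {Ks : ℕ → ℕ} (hB : BellmanSystem ε N V Ks)

include hε0 hε1 hN hB

lemma V_step : ∀ n, V n ≤ V (n + 1) := by
  intro n
  induction n using Nat.strong_induction_on with
  | _ n ih =>
    obtain ⟨hV0, hle, hKs⟩ := hB
    rcases Nat.eq_zero_or_pos n with rfl | hn
    · obtain ⟨hmem, hVeq, _⟩ := hKs 1 le_rfl
      have h1 : Ks 1 = 1 := by
        simp [Finset.mem_Icc] at hmem
        omega
      rw [hV0, hVeq, h1, bellman_abel hε0 hε1 hN V hV0 le_rfl le_rfl]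
      simp
      exact rew_nonneg hε0 hε1 N 1 1
    · obtain ⟨hmem, hVeq, _⟩ := hKs n hn
      simp only [Finset.mem_Icc] at hmem
      set K := Ks n with hKdef
      have h1 : bellmanRHS ε N V (n+1) K ≤ V (n+1) :=
        hle (n+1) (by omega) K (Finset.mem_Icc.mpr ⟨hmem.1, by omega⟩)
      refine le_trans ?_ h1
      rw [hVeq, bellman_abel hε0 hε1 hN V hV0 hmem.1 hmem.2,
        bellman_abel hε0 hε1 hN V hV0 hmem.1 (by omega)]
      have hr : Rew ε N n K ≤ Rew ε N (n+1) K := rew_mono_T hε0 hε1 N K (by omega)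
      have hs : ∑ i ∈ Finset.range (n - K), Pall ε N K (n - i - 1) * (V (i+1) - V i)
          ≤ ∑ i ∈ Finset.range (n + 1 - K), Pall ε N K (n + 1 - i - 1) * (V (i+1) - V i) := by
        calc ∑ i ∈ Finset.range (n - K), Pall ε N K (n - i - 1) * (V (i+1) - V i)
            ≤ ∑ i ∈ Finset.range (n - K), Pall ε N K (n + 1 - i - 1) * (V (i+1) - V i) := by
              apply Finset.sum_le_sum
              intro i hi
              simp only [Finset.mem_range] at hi
              have hVi : 0 ≤ V (i+1) - V i := by
                have := ih i (by omega)
                linarith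
              exact mul_le_mul_of_nonneg_right
                (pall_mono_T hε0 hε1 N K (by omega)) hVi
          _ ≤ ∑ i ∈ Finset.range (n + 1 - K), Pall ε N K (n + 1 - i - 1) * (V (i+1) - V i) := by
              apply Finset.sum_le_sum_of_subset_of_nonneg
                (Finset.range_subset_range.mpr (by omega))
              intro i hi _
              simp only [Finset.mem_range] at hi
              have hVi : 0 ≤ V (i+1) - V i := by
                have := ih i (by omega)
                linarith
              exact mul_nonneg (pall_nonneg hε0 hε1 N K _) hVi
      linarith

lemma V_mono : Monotone V := monotone_nat_of_le_succ (V_step hε0 hε1 hN hB)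

end Vprops

lemma rew_chain (hε0 : 0 < ε) (hε1 : ε < 1) {N : ℕ} (hN : 1 ≤ N) {t K : ℕ}
    (hK : 1 ≤ K) (hKt : K + 1 ≤ t) (hR : Rew ε N t (K + 1) < Rew ε N t K)
    {j K' : ℕ} (hjt : j ≤ t) (hKK' : K ≤ K') (hK'j : K' ≤ j) :
    Rew ε N j K' ≤ Rew ε N j K := by
  have hKj : K ≤ j := le_trans hKK' hK'j
  have hPtpos : 0 < Phat ε K t := phat_pos hε0 hε1 hK (by omega)
  set r : ℕ → ℝ := fun T => Phat ε (K+1) T / Phat ε K T with hrdef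
  have hrt : r t ^ N < (K:ℝ)/((K:ℝ)+1) := by
    have hR' : ((K:ℝ)+1) * Phat ε (K+1) t ^ N < (K:ℝ) * Phat ε K t ^ N := by
      unfold Rew Pall at hR
      push_cast at hR
      linarith
    simp only [hrdef]
    rw [div_pow, div_lt_div_iff₀ (by positivity) (by positivity)]
    nlinarith
  have hrmono : ∀ T, K ≤ T → r T ≤ r (T+1) := by
    intro T hT
    simp only [hrdef]
    rw [div_le_div_iff₀ (phat_pos hε0 hε1 hK hT) (phat_pos hε0 hε1 hK (by omega))]
    have := ratio_T hε0 hε1 hK hT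
    linarith
  have hrj_rt : r j ≤ r t := by
    have hgen : ∀ T, j ≤ T → r j ≤ r T := by
      intro T hT
      induction T, hT using Nat.le_induction with
      | base => exact le_rfl
      | succ T hT ih => exact le_trans ih (hrmono T (le_trans hKj hT))
    exact hgen t hjt
  have hsig : ∀ K'', K ≤ K'' → K'' ≤ j → Phat ε (K''+1) j / Phat ε K'' j ≤ r j := by
    intro K'' h1
    induction K'', h1 using Nat.le_induction with
    | base => intro _; exact le_rfl
    | succ K'' h1 ih =>
      intro h2
      have hij := ih (by omega)
      refine le_trans ?_ hij
      rw [div_le_div_iff₀ (phat_pos hε0 hε1 (by omega) (by omega))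
        (phat_pos hε0 hε1 (by omega) (by omega))]
      have := phat_logconcave hε0 hε1 (le_trans hK h1) j
      nlinarith
  have hstep : ∀ K'', K ≤ K'' → K'' + 1 ≤ j → Rew ε N j (K''+1) ≤ Rew ε N j K'' := by
    intro K'' h1 h2
    have hPp : 0 < Phat ε K'' j := phat_pos hε0 hε1 (le_trans hK h1) (by omega)
    set σ := Phat ε (K''+1) j / Phat ε K'' j with hσdef
    have hσ0 : 0 ≤ σ := div_nonneg (phat_nonneg hε0 hε1 _ _) hPp.le
    have hσN : σ ^ N < (K:ℝ)/((K:ℝ)+1) :=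
      lt_of_le_of_lt (pow_le_pow_left₀ hσ0 (le_trans (hsig K'' h1 (by omega)) hrj_rt) N) hrt
    have hmul : Phat ε (K''+1) j = σ * Phat ε K'' j := by
      rw [hσdef]
      field_simp
    have key : ((K'':ℝ)+1) * σ^N ≤ (K'':ℝ) := by
      have h3 : ((K'':ℝ)+1) * σ^N ≤ ((K'':ℝ)+1) * ((K:ℝ)/((K:ℝ)+1)) :=
        mul_le_mul_of_nonneg_left hσN.le (by positivity)
      have h4 : ((K'':ℝ)+1) * ((K:ℝ)/((K:ℝ)+1)) ≤ (K'':ℝ) := by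
        rw [← mul_div_assoc, div_le_iff₀ (by positivity)]
        have hc : (K:ℝ) ≤ (K'':ℝ) := by exact_mod_cast h1
        nlinarith
      linarith
    unfold Rew Pall
    rw [hmul, mul_pow]
    push_cast
    calc ((K'':ℝ)+1) * (σ^N * Phat ε K'' j ^ N) = (((K'':ℝ)+1) * σ^N) * Phat ε K'' j ^ N := by
          ring
      _ ≤ (K'':ℝ) * Phat ε K'' j ^ N := mul_le_mul_of_nonneg_right key (by positivity)
  have hgen : ∀ K'', K ≤ K'' → K'' ≤ j → Rew ε N j K'' ≤ Rew ε N j K := by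
    intro K'' h1
    induction K'', h1 using Nat.le_induction with
    | base => intro _; exact le_rfl
    | succ K'' h1 ih => intro h2; exact le_trans (hstep K'' h1 h2) (ih (by omega))
  exact hgen K' hKK' hK'j


/-- Let `0 < ε < 1`, `N ≥ 1`, and let `t ≥ 1`, `K` with `1 ≤ K` and
`K+1 ≤ t`. If `R_t(K) > R_t(K+1)`, then for every `j ∈ {1,…,t}` one has
`K*_j ≤ K̂_j ≤ K`. -/
theorem corollary_Kt (ε : ℝ) (hε0 : 0 < ε) (hε1 : ε < 1) (N : ℕ) (hN : 1 ≤ N)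
    (V : ℕ → ℝ) (Ks : ℕ → ℕ) (hB : BellmanSystem ε N V Ks)
    (t K : ℕ) (hK : 1 ≤ K) (hKt : K + 1 ≤ t)
    (hR : Rew ε N t (K + 1) < Rew ε N t K)
    (j : ℕ) (hj1 : 1 ≤ j) (hjt : j ≤ t) (Khj : ℕ) (hG : IsGreedy ε N j Khj) :
    Ks j ≤ Khj ∧ Khj ≤ K := by
  obtain ⟨hGmem, hGmax, hGmin⟩ := hG
  have hGmem' := Finset.mem_Icc.mp hGmem
  have part2 : Khj ≤ K := by
    by_contra hlt
    push_neg at hlt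
    have hKj : K ≤ j := by omega
    have hchain : Rew ε N j Khj ≤ Rew ε N j K :=
      rew_chain hε0 hε1 hN hK hKt hR hjt (by omega) hGmem'.2
    have hmax : ∀ K' ∈ Finset.Icc 1 j, Rew ε N j K' ≤ Rew ε N j K :=
      fun K' h => le_trans (hGmax K' h) hchain
    have := hGmin K (Finset.mem_Icc.mpr ⟨hK, hKj⟩) hmax
    omega
  refine ⟨?_, part2⟩
  by_contra hlt
  push_neg at hlt
  have hVstep := V_step hε0 hε1 hN hB
  obtain ⟨hV0, hle, hKs⟩ := hB
  obtain ⟨hKsmem, hVeq, hKsmin⟩ := hKs j hj1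
  have hKsmem' := Finset.mem_Icc.mp hKsmem
  have hcomp : bellmanRHS ε N V j (Ks j) ≤ bellmanRHS ε N V j Khj := by
    rw [bellman_abel hε0 hε1 hN V hV0 hKsmem'.1 hKsmem'.2,
      bellman_abel hε0 hε1 hN V hV0 hGmem'.1 hGmem'.2]
    have h1 : Rew ε N j (Ks j) ≤ Rew ε N j Khj := hGmax (Ks j) hKsmem
    have h2 : ∑ i ∈ Finset.range (j - Ks j), Pall ε N (Ks j) (j - i - 1) * (V (i+1) - V i)
        ≤ ∑ i ∈ Finset.range (j - Khj), Pall ε N Khj (j - i - 1) * (V (i+1) - V i) := by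
      calc ∑ i ∈ Finset.range (j - Ks j), Pall ε N (Ks j) (j - i - 1) * (V (i+1) - V i)
          ≤ ∑ i ∈ Finset.range (j - Ks j), Pall ε N Khj (j - i - 1) * (V (i+1) - V i) := by
            apply Finset.sum_le_sum
            intro i _
            exact mul_le_mul_of_nonneg_right
              (pall_anti_K hε0 hε1 hGmem'.1 (le_of_lt hlt) N _)
              (by have := hVstep i; linarith)
        _ ≤ ∑ i ∈ Finset.range (j - Khj), Pall ε N Khj (j - i - 1) * (V (i+1) - V i) := by
            apply Finset.sum_le_sum_of_subset_of_nonneg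
              (Finset.range_subset_range.mpr (by omega))
            intro i _ _
            exact mul_nonneg (pall_nonneg hε0 hε1 N Khj _) (by have := hVstep i; linarith)
    linarith
  have hVKh : V j = bellmanRHS ε N V j Khj := by
    have hub : bellmanRHS ε N V j Khj ≤ V j := hle j hj1 Khj hGmem
    linarith [hVeq, hcomp]
  have := hKsmin Khj hGmem hVKh
  omega
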